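/- The fiber θ^{-1}(1) of the product map θ : Sym^3(S^1) → S^1 is homeomorphic to the standard 2-simplex Δ^2 = {(d1, d2) ∈ [0,1]^2 : d1 + d2 ≤ 1}, via the map t(d1, d2) = {λ, λ e^{2πi d1}, λ e^{2πi(d1+d2)}} where λ = e^{−2πi(2d1+d2)/3}. -/

import Mathlib

open CategoryTheory

/-- The singular chain complex of a topological space with coefficients in `R`. -/
noncomputable def singularChainComplex (R : Type) [CommRing R] :
    TopCat ⥤ ChainComplex (ModuleCat R) ℕ :=
  TopCat.toSSet ⋙ ((SimplicialObject.whiskering _ _).obj (ModuleCat.free R)) ⋙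
    AlgebraicTopology.alternatingFaceMapComplex _

/-- Singular homology with coefficients in `R`, as a functor `TopCat ⥤ ModuleCat R`. -/
noncomputable def singularHomology (R : Type) [CommRing R] (n : ℕ) :
    TopCat ⥤ ModuleCat R :=
  singularChainComplex R ⋙ HomologicalComplex.homologyFunctor _ _ n

/-- The `n`-th Betti number of a topological space with coefficients in `R`. -/
noncomputable def bettiNumber (R : Type) [CommRing R] (n : ℕ) (X : Type)
    [TopologicalSpace X] : ℕ :=
  Module.finrank R ((singularHomology R n).obj (TopCat.of X))

/-- The setoid on `Fin n → X` identifying tuples up to permutation. -/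
def symmSetoid (X : Type) (n : ℕ) : Setoid (Fin n → X) where
  r x y := ∃ e : Equiv.Perm (Fin n), x ∘ e = y
  iseqv := by
    refine ⟨fun x => ⟨Equiv.refl _, rfl⟩, ?_, ?_⟩
    · rintro x y ⟨e, rfl⟩
      exact ⟨e.symm, by ext i; simp⟩
    · rintro x y z ⟨e, rfl⟩ ⟨f, rfl⟩
      exact ⟨f.trans e, by ext i; simp⟩

/-- The `n`-th symmetric product of a topological space, with the quotient topology. -/
def SymProd (X : Type) [TopologicalSpace X] (n : ℕ) : Type :=
  Quotient (symmSetoid X n)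

instance (X : Type) [TopologicalSpace X] (n : ℕ) : TopologicalSpace (SymProd X n) :=
  instTopologicalSpaceQuotient

/-- The product map `θ : Sym³(S¹) → S¹`, `{λ₁, λ₂, λ₃} ↦ λ₁λ₂λ₃`. -/
noncomputable def theta : SymProd Circle 3 → Circle :=
  Quotient.lift (fun f : Fin 3 → Circle => ∏ i, f i)
    (by rintro x y ⟨e, rfl⟩; exact (Equiv.prod_comp e x).symm)

/-- The standard 2-simplex `Δ² = {(d₁, d₂) ∈ [0,1]² : d₁ + d₂ ≤ 1}`. -/
def Delta2 : Type :=
  {d : ℝ × ℝ // d.1 ∈ Set.Icc (0:ℝ) 1 ∧ d.2 ∈ Set.Icc (0:ℝ) 1 ∧ d.1 + d.2 ≤ 1}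

instance : TopologicalSpace Delta2 := instTopologicalSpaceSubtype

open Real in
/-- The map `t : Δ² → θ⁻¹(1)`, `t(d₁,d₂) = {λ, λe^{2πi d₁}, λe^{2πi(d₁+d₂)}}` with
`λ = e^{-2πi(2d₁+d₂)/3}`. -/
noncomputable def tMap (d : Delta2) : SymProd Circle 3 :=
  Quotient.mk (symmSetoid Circle 3)
    ![Circle.exp (-(2 * π * (2 * d.1.1 + d.1.2) / 3)),
      Circle.exp (-(2 * π * (2 * d.1.1 + d.1.2) / 3)) * Circle.exp (2 * π * d.1.1),
      Circle.exp (-(2 * π * (2 * d.1.1 + d.1.2) / 3)) * Circle.exp (2 * π * (d.1.1 + d.1.2))]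

open Real Topology

noncomputable def sv (x y : ℝ) : Fin 3 → ℝ := ![(-(2*x+y))/3, (x-y)/3, (x+2*y)/3]

lemma sv_abs {x y : ℝ} (hx : 0 ≤ x) (hy : 0 ≤ y) (hxy : x + y ≤ 1) (i : Fin 3) :
    |sv x y i| ≤ 2/3 := by
  fin_cases i <;> simp [sv, abs_le] <;> constructor <;> linarith

lemma sv_sum (x y : ℝ) : sv x y 0 + sv x y 1 + sv x y 2 = 0 := by
  simp [sv]; ring

set_option maxHeartbeats 2000000 in
lemma inj_core {x y x' y' : ℝ} (hx : 0 ≤ x) (hy : 0 ≤ y) (hxy : x + y ≤ 1)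
    (hx' : 0 ≤ x') (hy' : 0 ≤ y') (hxy' : x' + y' ≤ 1) (e : Equiv.Perm (Fin 3))
    (h : ∀ i, ∃ n : ℤ, sv x y (e i) = sv x' y' i + n) : x = x' ∧ y = y' := by
  choose n hn using h
  have hsum : (n 0 : ℝ) + n 1 + n 2 = 0 := by
    have h1 : sv x y (e 0) + sv x y (e 1) + sv x y (e 2) = 0 := by
      have := Fintype.sum_equiv e (fun i => sv x y (e i)) (sv x y) (fun i => rfl)
      rw [Fin.sum_univ_three, Fin.sum_univ_three] at this
      rw [this]; exact sv_sum x y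
    have h2 := sv_sum x' y'
    have := hn 0; have := hn 1; have := hn 2
    linarith
  have hb : ∀ i, -1 ≤ n i ∧ n i ≤ 1 := by
    intro i
    have h1 := abs_le.1 (sv_abs hx hy hxy (e i))
    have h2 := abs_le.1 (sv_abs hx' hy' hxy' i)
    have h3 := hn i
    have hl : (-2 : ℤ) < n i := by exact_mod_cast show (-2:ℝ) < (n i : ℤ) by linarith
    have hr : (n i : ℤ) < 2 := by exact_mod_cast show ((n i : ℤ):ℝ) < 2 by linarith
    omega
  have hn' : n 0 + n 1 + n 2 = 0 := by exact_mod_cast hsum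
  have he01 : e 0 ≠ e 1 := fun h => by simpa using e.injective h
  have he02 : e 0 ≠ e 2 := fun h => by simpa using e.injective h
  have he12 : e 1 ≠ e 2 := fun h => by simpa using e.injective h
  have h0 := hn 0; have h1 := hn 1; have h2 := hn 2
  have v0 : e 0 = 0 ∨ e 0 = 1 ∨ e 0 = 2 := by omega
  have v1 : e 1 = 0 ∨ e 1 = 1 ∨ e 1 = 2 := by omega
  have v2 : e 2 = 0 ∨ e 2 = 1 ∨ e 2 = 2 := by omega
  obtain ⟨hb0l, hb0r⟩ := hb 0; obtain ⟨hb1l, hb1r⟩ := hb 1; obtain ⟨hb2l, hb2r⟩ := hb 2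
  rcases v0 with hv0 | hv0 | hv0 <;> rcases v1 with hv1 | hv1 | hv1 <;>
    rcases v2 with hv2 | hv2 | hv2 <;>
    first
      | (exact absurd (hv0.trans hv1.symm) he01)
      | (exact absurd (hv0.trans hv2.symm) he02)
      | (exact absurd (hv1.trans hv2.symm) he12)
      | (rw [hv0] at h0; rw [hv1] at h1; rw [hv2] at h2;
         simp only [sv, Matrix.cons_val_zero, Matrix.cons_val_one, Matrix.head_cons,
           Matrix.cons_val_two, Matrix.tail_cons] at h0 h1 h2;
         interval_cases h : n 0 <;> interval_cases h' : n 1 <;> interval_cases h'' : n 2 <;>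
           push_cast at h0 h1 h2 <;> first | omega | (constructor <;> linarith))

/-- normal form of tMap -/
lemma tMap_eq (d : Delta2) :
    tMap d = Quotient.mk (symmSetoid Circle 3)
      (fun i => Circle.exp (2 * π * sv d.1.1 d.1.2 i)) := by
  unfold tMap
  congr 1
  funext i
  fin_cases i
  · show Circle.exp _ = Circle.exp (2 * π * ((-(2*d.1.1+d.1.2))/3))
    congr 1; ring
  · show Circle.exp _ * Circle.exp _ = Circle.exp (2 * π * ((d.1.1-d.1.2)/3))
    rw [← Circle.exp_add]; congr 1; ring
  · show Circle.exp _ * Circle.exp _ = Circle.exp (2 * π * ((d.1.1+2*d.1.2)/3))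
    rw [← Circle.exp_add]; congr 1; ring

lemma theta_tMap (d : Delta2) : theta (tMap d) = 1 := by
  rw [tMap_eq]
  show (∏ i, Circle.exp (2 * π * sv d.1.1 d.1.2 i)) = 1
  rw [Fin.prod_univ_three, ← Circle.exp_add, ← Circle.exp_add]
  have h : 2*π*sv d.1.1 d.1.2 0 + 2*π*sv d.1.1 d.1.2 1 + 2*π*sv d.1.1 d.1.2 2
      = 2*π*(sv d.1.1 d.1.2 0 + sv d.1.1 d.1.2 1 + sv d.1.1 d.1.2 2) := by ring
  rw [h, sv_sum, mul_zero, Circle.exp_zero]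

lemma tMap_injective : Function.Injective tMap := by
  intro d d' h
  rw [tMap_eq, tMap_eq] at h
  have hrel := Quotient.exact h
  obtain ⟨e, he⟩ := hrel
  obtain ⟨⟨x, y⟩, ⟨hx0, hx1⟩, ⟨hy0, hy1⟩, hxy⟩ := d
  obtain ⟨⟨x', y'⟩, ⟨hx0', hx1'⟩, ⟨hy0', hy1'⟩, hxy'⟩ := d'
  have key : ∀ i, ∃ n : ℤ, sv x y (e i) = sv x' y' i + n := by
    intro i
    have hi := congrFun he i
    simp only [Function.comp_apply] at hi
    obtain ⟨m, hm⟩ := Circle.exp_eq_exp.1 hi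
    refine ⟨m, ?_⟩
    have hπ : (0:ℝ) < π := pi_pos
    have : 2 * π * sv x y (e i) = 2 * π * (sv x' y' i + m) := by rw [hm]; ring
    have h2 : (2 * π) * sv x y (e i) = (2 * π) * (sv x' y' i + m) := by linarith
    exact mul_left_cancel₀ (by positivity) h2
  obtain ⟨hxx, hyy⟩ := inj_core hx0 hy0 hxy hx0' hy0' hxy' e key
  subst hxx; subst hyy; rfl

lemma exp_shift (t : ℝ) : Circle.exp (2*π*(t-1)) = Circle.exp (2*π*t) :=
  Circle.exp_eq_exp.2 ⟨-1, by push_cast; ring⟩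

def cyc1 : Equiv.Perm (Fin 3) := ⟨![2,0,1], ![1,2,0], by decide, by decide⟩
def cyc2 : Equiv.Perm (Fin 3) := ⟨![1,2,0], ![2,0,1], by decide, by decide⟩

lemma tMap_surj (x : SymProd Circle 3) (hx : theta x = 1) : ∃ d : Delta2, tMap d = x := by
  induction x using Quotient.ind with | _ f => ?_
  set a : Fin 3 → ℝ := fun i => Int.fract (Complex.arg (f i) / (2*π)) with ha
  have hπ : (0:ℝ) < π := pi_pos
  have hfa : ∀ i, Circle.exp (2*π*a i) = f i := by
    intro i
    rw [show f i = Circle.exp (Complex.arg (f i)) from (Circle.exp_arg _).symm]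
    apply Circle.exp_eq_exp.2
    refine ⟨-⌊Complex.arg (f i) / (2*π)⌋, ?_⟩
    rw [ha]
    simp only [Int.fract]
    push_cast
    field_simp
    ring
  have ha0 : ∀ i, 0 ≤ a i := fun i => Int.fract_nonneg _
  have ha1 : ∀ i, a i < 1 := fun i => Int.fract_lt_one _
  have hprod : (∏ i, f i) = 1 := hx
  rw [Fin.prod_univ_three, ← hfa 0, ← hfa 1, ← hfa 2, ← Circle.exp_add, ← Circle.exp_add]
    at hprod
  obtain ⟨k, hk⟩ := Circle.exp_eq_one.1 hprod
  have h2π : (2*π) ≠ 0 := by positivity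
  have hsum : a 0 + a 1 + a 2 = k := by
    have h2 : (2*π) * (a 0 + a 1 + a 2) = (2*π) * k := by linear_combination hk
    exact mul_left_cancel₀ h2π h2
  set e := Tuple.sort a with he
  set b : Fin 3 → ℝ := a ∘ e with hb
  have hmono : Monotone b := Tuple.monotone_sort a
  have hb01 : b 0 ≤ b 1 := hmono (by decide)
  have hb12 : b 1 ≤ b 2 := hmono (by decide)
  have hb0 : ∀ i, 0 ≤ b i := fun i => ha0 (e i)
  have hb1 : ∀ i, b i < 1 := fun i => ha1 (e i)
  have hbsum : b 0 + b 1 + b 2 = k := by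
    have h1 : b 0 + b 1 + b 2 = a 0 + a 1 + a 2 := by
      have := Fintype.sum_equiv e (fun i => a (e i)) a (fun i => rfl)
      rw [Fin.sum_univ_three, Fin.sum_univ_three] at this
      exact this
    rw [h1, hsum]
  have hfb : ∀ i, Circle.exp (2*π*b i) = f (e i) := fun i => hfa (e i)
  have hk0 : (0:ℤ) ≤ k := by
    have : (0:ℝ) ≤ (k:ℤ) := by
      rw [← hsum]; have := ha0 0; have := ha0 1; have := ha0 2; linarith
    exact_mod_cast this
  have hk3 : k < 3 := by
    have : ((k:ℤ):ℝ) < 3 := by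
      rw [← hsum]
      have := ha1 0; have := ha1 1; have := ha1 2
      linarith
    exact_mod_cast this
  interval_cases k
  · -- k = 0
    push_cast at hbsum
    have c1 : (0:ℝ) ≤ b 1 - b 0 := by linarith
    have c2 : b 1 - b 0 ≤ 1 := by linarith [hb0 0, hb1 1]
    have c3 : (0:ℝ) ≤ b 2 - b 1 := by linarith
    have c4 : b 2 - b 1 ≤ 1 := by linarith [hb0 1, hb1 2]
    have c5 : (b 1 - b 0) + (b 2 - b 1) ≤ 1 := by linarith [hb0 0, hb1 2]
    refine ⟨⟨(b 1 - b 0, b 2 - b 1), Set.mem_Icc.2 ⟨c1, c2⟩, Set.mem_Icc.2 ⟨c3, c4⟩, c5⟩, ?_⟩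
    refine (tMap_eq _).trans ?_
    apply Quotient.sound
    refine ⟨e.symm, funext fun i => ?_⟩
    show Circle.exp (2 * π * sv _ _ (e.symm i)) = f i
    have hsv : ∀ j, sv (b 1 - b 0) (b 2 - b 1) j = b j := by
      intro j; fin_cases j <;> simp [sv] <;> linarith
    rw [hsv, show b (e.symm i) = a (e (e.symm i)) from rfl, Equiv.apply_symm_apply]
    exact hfa i
  · -- k = 1
    push_cast at hbsum
    have c1 : (0:ℝ) ≤ b 0 - b 2 + 1 := by linarith [hb0 0, hb1 2]
    have c2 : b 0 - b 2 + 1 ≤ 1 := by linarith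
    have c3 : (0:ℝ) ≤ b 1 - b 0 := by linarith
    have c4 : b 1 - b 0 ≤ 1 := by linarith [hb0 0, hb1 1]
    have c5 : (b 0 - b 2 + 1) + (b 1 - b 0) ≤ 1 := by linarith
    refine ⟨⟨(b 0 - b 2 + 1, b 1 - b 0), Set.mem_Icc.2 ⟨c1, c2⟩, Set.mem_Icc.2 ⟨c3, c4⟩, c5⟩, ?_⟩
    refine (tMap_eq _).trans ?_
    apply Quotient.sound
    refine ⟨Equiv.trans e.symm cyc1.symm, funext fun i => ?_⟩
    show Circle.exp (2 * π * sv _ _ (cyc1.symm (e.symm i))) = f i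
    have hsv : ∀ j, Circle.exp (2 * π * sv (b 0 - b 2 + 1) (b 1 - b 0) j)
        = Circle.exp (2 * π * b (cyc1 j)) := by
      intro j
      fin_cases j
      · show Circle.exp (2 * π * ((-(2*(b 0 - b 2 + 1)+(b 1 - b 0)))/3)) = Circle.exp (2*π* b 2)
        rw [show ((-(2*(b 0 - b 2 + 1)+(b 1 - b 0)))/3) = b 2 - 1 by linarith]
        exact exp_shift _
      · show Circle.exp (2 * π * (((b 0 - b 2 + 1)-(b 1 - b 0))/3)) = Circle.exp (2*π* b 0)
        rw [show (((b 0 - b 2 + 1)-(b 1 - b 0))/3 : ℝ) = b 0 by linarith]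
      · show Circle.exp (2 * π * (((b 0 - b 2 + 1)+2*(b 1 - b 0))/3)) = Circle.exp (2*π* b 1)
        rw [show (((b 0 - b 2 + 1)+2*(b 1 - b 0))/3 : ℝ) = b 1 by linarith]
    rw [hsv, Equiv.apply_symm_apply, show b (e.symm i) = a (e (e.symm i)) from rfl,
      Equiv.apply_symm_apply]
    exact hfa i
  · -- k = 2
    push_cast at hbsum
    have c1 : (0:ℝ) ≤ b 2 - b 1 := by linarith
    have c2 : b 2 - b 1 ≤ 1 := by linarith [hb0 1, hb1 2]
    have c3 : (0:ℝ) ≤ b 0 - b 2 + 1 := by linarith [hb0 0, hb1 2]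
    have c4 : b 0 - b 2 + 1 ≤ 1 := by linarith
    have c5 : (b 2 - b 1) + (b 0 - b 2 + 1) ≤ 1 := by linarith
    refine ⟨⟨(b 2 - b 1, b 0 - b 2 + 1), Set.mem_Icc.2 ⟨c1, c2⟩, Set.mem_Icc.2 ⟨c3, c4⟩, c5⟩, ?_⟩
    refine (tMap_eq _).trans ?_
    apply Quotient.sound
    refine ⟨Equiv.trans e.symm cyc2.symm, funext fun i => ?_⟩
    show Circle.exp (2 * π * sv _ _ (cyc2.symm (e.symm i))) = f i
    have hsv : ∀ j, Circle.exp (2 * π * sv (b 2 - b 1) (b 0 - b 2 + 1) j)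
        = Circle.exp (2 * π * b (cyc2 j)) := by
      intro j
      fin_cases j
      · show Circle.exp (2 * π * ((-(2*(b 2 - b 1)+(b 0 - b 2 + 1)))/3)) = Circle.exp (2*π* b 1)
        rw [show ((-(2*(b 2 - b 1)+(b 0 - b 2 + 1)))/3) = b 1 - 1 by linarith]
        exact exp_shift _
      · show Circle.exp (2 * π * (((b 2 - b 1)-(b 0 - b 2 + 1))/3)) = Circle.exp (2*π* b 2)
        rw [show (((b 2 - b 1)-(b 0 - b 2 + 1))/3) = b 2 - 1 by linarith]
        exact exp_shift _
      · show Circle.exp (2 * π * (((b 2 - b 1)+2*(b 0 - b 2 + 1))/3)) = Circle.exp (2*π* b 0)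
        rw [show (((b 2 - b 1)+2*(b 0 - b 2 + 1))/3 : ℝ) = b 0 + 1 - 1 by linarith,
          show (b 0 + 1 - 1 : ℝ) = b 0 by ring]
    rw [hsv, Equiv.apply_symm_apply, show b (e.symm i) = a (e (e.symm i)) from rfl,
      Equiv.apply_symm_apply]
    exact hfa i

lemma cont_sv (j : Fin 3) :
    Continuous (fun d : Delta2 => Circle.exp (2 * π * sv d.1.1 d.1.2 j)) := by
  apply Circle.exp.continuous.comp
  fin_cases j
  · show Continuous fun d : Delta2 => 2 * π * ((-(2 * d.1.1 + d.1.2)) / 3)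
    fun_prop
  · show Continuous fun d : Delta2 => 2 * π * ((d.1.1 - d.1.2) / 3)
    fun_prop
  · show Continuous fun d : Delta2 => 2 * π * ((d.1.1 + 2 * d.1.2) / 3)
    fun_prop

lemma tMap_continuous : Continuous tMap := by
  have h : tMap = fun d => Quotient.mk (symmSetoid Circle 3)
      (fun i => Circle.exp (2 * π * sv d.1.1 d.1.2 i)) := funext tMap_eq
  rw [h]
  exact Continuous.comp (isQuotientMap_quot_mk).continuous (continuous_pi fun i => cont_sv i)

instance : CompactSpace Delta2 := by
  have hS : IsCompact {d : ℝ × ℝ | d.1 ∈ Set.Icc (0:ℝ) 1 ∧ d.2 ∈ Set.Icc (0:ℝ) 1 ∧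
      d.1 + d.2 ≤ 1} := by
    apply IsCompact.of_isClosed_subset ((isCompact_Icc).prod isCompact_Icc)
    · exact ((isClosed_Icc.preimage continuous_fst).inter
        ((isClosed_Icc.preimage continuous_snd).inter
          (isClosed_le (f := fun d : ℝ × ℝ => d.1 + d.2) (g := fun _ => (1:ℝ))
            (by fun_prop) continuous_const)))
    · rintro ⟨x, y⟩ ⟨h1, h2, h3⟩; exact ⟨h1, h2⟩
  exact isCompact_iff_compactSpace.mp hS

lemma closed_image {C : Set Delta2} (hC : IsClosed C) : IsClosed (tMap '' C) := by
  apply (isQuotientMap_quot_mk :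
    IsQuotientMap (Quotient.mk (symmSetoid Circle 3))).isClosed_preimage.1
  show IsClosed (Quotient.mk (symmSetoid Circle 3) ⁻¹' (tMap '' C))
  have hset : (Quotient.mk (symmSetoid Circle 3)) ⁻¹' (tMap '' C) =
      ⋃ e : Equiv.Perm (Fin 3), (fun d : Delta2 =>
        (fun i => Circle.exp (2 * π * sv d.1.1 d.1.2 (e i)))) '' C := by
    ext z
    simp only [Set.mem_preimage, Set.mem_image, Set.mem_iUnion]
    constructor
    · rintro ⟨d, hd, hdz⟩
      rw [tMap_eq] at hdz
      obtain ⟨e, he⟩ := Quotient.exact hdz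
      exact ⟨e, d, hd, he⟩
    · rintro ⟨e, d, hd, hz⟩
      refine ⟨d, hd, ?_⟩
      rw [tMap_eq]
      exact Quotient.sound ⟨e, hz⟩
  rw [hset]
  apply isClosed_iUnion_of_finite
  intro e
  apply IsCompact.isClosed
  exact (hC.isCompact).image (continuous_pi fun i => cont_sv (e i))

noncomputable def tEquiv : Delta2 ≃ {x : SymProd Circle 3 // theta x = 1} :=
  Equiv.ofBijective (fun d => ⟨tMap d, theta_tMap d⟩)
    ⟨fun d d' h => tMap_injective (congrArg Subtype.val h),
     fun x => by
      obtain ⟨d, hd⟩ := tMap_surj x.1 x.2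
      exact ⟨d, Subtype.ext hd⟩⟩

/-- The fiber `θ⁻¹(1)` of the product map `θ : Sym³(S¹) → S¹` is homeomorphic to the
standard 2-simplex, via the explicit map `t`. -/
theorem fiber_theta_homeomorph_simplex :
    ∃ h : Delta2 ≃ₜ {x : SymProd Circle 3 // theta x = 1},
      ∀ d : Delta2, (h d : SymProd Circle 3) = tMap d := by
  have hcont : Continuous (fun d =>
      (⟨tMap d, theta_tMap d⟩ : {x : SymProd Circle 3 // theta x = 1})) :=
    Continuous.subtype_mk tMap_continuous _
  refine ⟨{ toEquiv := tEquiv, continuous_toFun := hcont, continuous_invFun := ?_ },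
    fun d => rfl⟩
  show Continuous (⇑tEquiv.symm)
  rw [continuous_iff_isClosed]
  intro C hC
  have himg : tEquiv.symm ⁻¹' C = tEquiv '' C := (Equiv.image_eq_preimage_symm _ _).symm
  rw [himg]
  rw [show ⇑tEquiv = (fun d => (⟨tMap d, theta_tMap d⟩ :
    {x : SymProd Circle 3 // theta x = 1})) from rfl]
  have h2 : (fun d => (⟨tMap d, theta_tMap d⟩ : {x : SymProd Circle 3 // theta x = 1})) '' C
      = Subtype.val ⁻¹' (tMap '' C) := by
    ext x
    simp only [Set.mem_image, Set.mem_preimage, Subtype.ext_iff]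
  rw [h2]
  exact (closed_image hC).preimage continuous_subtype_val
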